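/- Let F be a finite field with |F| = q and let 0 ≤ k ≤ n be integers. Then the number N of k-dimensional F-linear subspaces of Fⁿ satisfies N · ∏_{i=0}^{k−1} (q^k − q^i) = ∏_{i=0}^{k−1} (q^n − q^i); equivalently, N equals the Gaussian binomial coefficient binom(n,k)_q. -/

import Mathlib

/-- The fiber of the "span" map over a subspace `V` is equivalent to the linearly independent
`k`-tuples in `V`. -/
noncomputable def fiberEquiv (F : Type*) [Field F] (k n : ℕ)
    (V : Submodule F (Fin n → F)) (hV : Module.finrank F V = k) :
    { s : { s : Fin k → (Fin n → F) // LinearIndependent F s } //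
        Submodule.span F (Set.range s.1) = V } ≃
      { t : Fin k → V // LinearIndependent F t } where
  toFun s :=
    ⟨fun i => ⟨s.1.1 i, by have h := Submodule.subset_span (R := F) (s := Set.range s.1.1) (Set.mem_range_self i); rwa [s.2] at h⟩,
      LinearIndependent.of_comp V.subtype (by simpa [Function.comp_def] using s.1.2)⟩
  invFun t :=
    ⟨⟨fun i => (t.1 i : Fin n → F), t.2.map' V.subtype (Submodule.ker_subtype _)⟩, by
      show Submodule.span F (Set.range fun i => (t.1 i : Fin n → F)) = V
      have htop : Submodule.span F (Set.range t.1) = ⊤ :=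
        t.2.span_eq_top_of_card_eq_finrank' (by simp [hV])
      have : (fun i => (t.1 i : Fin n → F)) = V.subtype ∘ t.1 := rfl
      rw [this, Set.range_comp, ← Submodule.map_span, htop, Submodule.map_top,
        Submodule.range_subtype]⟩
  left_inv s := by ext i; rfl
  right_inv t := by ext i; rfl

theorem card_subspaces_mul_eq (F : Type*) [Field F] [Fintype F] (q : ℕ)
    (hq : Fintype.card F = q) (k n : ℕ) (hkn : k ≤ n) :
    Nat.card {V : Submodule F (Fin n → F) // Module.finrank F V = k} *
        ∏ i ∈ Finset.range k, (q ^ k - q ^ i) =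
      ∏ i ∈ Finset.range k, (q ^ n - q ^ i) := by
  subst hq
  classical
  set q := Fintype.card F
  -- count linearly independent k-tuples in Fⁿ directly
  have hdirect : Nat.card { s : Fin k → (Fin n → F) // LinearIndependent F s } =
      ∏ i ∈ Finset.range k, (q ^ n - q ^ i) := by
    have h := card_linearIndependent (K := F) (V := Fin n → F) (k := k) (by simpa using hkn)
    rw [show Module.finrank F (Fin n → F) = n by simp] at h
    rw [h]
    exact Fin.prod_univ_eq_prod_range (fun i => q ^ n - q ^ i) k
  -- fibered count over the span
  have hfiber : Nat.card { s : Fin k → (Fin n → F) // LinearIndependent F s } =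
      Nat.card {V : Submodule F (Fin n → F) // Module.finrank F V = k} *
        ∏ i ∈ Finset.range k, (q ^ k - q ^ i) := by
    have e : { s : Fin k → (Fin n → F) // LinearIndependent F s } ≃
        Σ V : {V : Submodule F (Fin n → F) // Module.finrank F V = k},
          { t : Fin k → V.1 // LinearIndependent F t } := by
      refine (Equiv.sigmaFiberEquiv
        (f := fun s : { s : Fin k → (Fin n → F) // LinearIndependent F s } =>
          (⟨Submodule.span F (Set.range s.1), by
            rw [finrank_span_eq_card s.2]; simp⟩ :
            {V : Submodule F (Fin n → F) // Module.finrank F V = k}))).symm.trans ?_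
      refine Equiv.sigmaCongrRight fun V => ?_
      refine (Equiv.subtypeEquivRight fun s => ?_).trans (fiberEquiv F k n V.1 V.2)
      constructor
      · intro h; exact congrArg Subtype.val h
      · intro h; exact Subtype.ext h
    have : ∀ V : {V : Submodule F (Fin n → F) // Module.finrank F V = k},
        Nat.card { t : Fin k → V.1 // LinearIndependent F t } =
          ∏ i ∈ Finset.range k, (q ^ k - q ^ i) := by
      intro V
      have h := card_linearIndependent (K := F) (V := V.1) (k := k) (le_of_eq V.2.symm)
      rw [V.2] at h
      rw [h]
      exact Fin.prod_univ_eq_prod_range (fun i => q ^ k - q ^ i) k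
    haveI ft : Fintype {V : Submodule F (Fin n → F) // Module.finrank F V = k} :=
      Fintype.ofFinite _
    haveI ft2 : ∀ V : {V : Submodule F (Fin n → F) // Module.finrank F V = k},
        Fintype { t : Fin k → V.1 // LinearIndependent F t } := fun V => Fintype.ofFinite _
    rw [Nat.card_congr e]
    rw [Nat.card_eq_fintype_card, Fintype.card_sigma]
    rw [Nat.card_eq_fintype_card (α := {V : Submodule F (Fin n → F) // Module.finrank F V = k})]
    rw [Finset.sum_congr rfl fun V _ => ((Nat.card_eq_fintype_card).symm.trans (this V) :
        Fintype.card { t : Fin k → V.1 // LinearIndependent F t } = _)]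
    rw [Finset.sum_const, Finset.card_univ, smul_eq_mul]
  rw [← hfiber, hdirect]
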